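/- arXiv:1810.03086 — 3 statements merged into one kernel-verified Lean document; each statement's English description precedes it below -/
import Mathlib

section
/- Let D and D̃ be derivations of 𝔞 such that B is both D-invariant and D̃-invariant, and let 𝔤 and 𝔤̃ be the double extensions of (𝔞, B) by D and by D̃ on K × 𝔞 × K, with brackets ⁅·,·⁆_𝔤 and ⁅·,·⁆_𝔤̃. Suppose π₀ : 𝔞 → 𝔞 is a bijective Lie algebra homomorphism with B (π₀ a) (π₀ b) = B a b for all a,b; λ ∈ K with λ ≠ 0; and κ ∈ 𝔞 satisfies π₀⁻¹ ∘ D̃ ∘ π₀ = λ • D + ad κ (as linear maps 𝔞 → 𝔞, where ad κ is b ↦ ⁅κ,b⁆). Set ρ := (2 : K)⁻¹ • B κ κ and define π : K × 𝔞 × K → K × 𝔞 × K by π (u,a,v) := (λ·u + B κ a − λ⁻¹·ρ·v, π₀ a − (λ⁻¹·v) • π₀ κ, λ⁻¹·v). Then π is a bijective K-linear map, π ⁅f,g⁆_𝔤 = ⁅π f, π g⁆_𝔤̃ for all f,g, B_𝔤̃ (π f) (π g) = B_𝔤 f g for all f,g (where B_𝔤 (u,a,v) (u',a',v') := B a a'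 + u·v' + u'·v and likewise B_𝔤̃), and π maps the subspace K × 𝔞 × {0} onto K × 𝔞 × {0}. -/
/-- The bracket of the double extension of `(𝔞, B)` by the derivation `E`
on the space `K × 𝔞 × K`. -/
def doubleExtBracket {K : Type*} [Field K] {L : Type*} [LieRing L] [LieAlgebra K L]
    (B : L →ₗ[K] L →ₗ[K] K) (E : L →ₗ[K] L) (f g : K × L × K) : K × L × K :=
  (B (E f.2.1) g.2.1, ⁅f.2.1, g.2.1⁆ + f.2.2 • E g.2.1 - g.2.2 • E f.2.1, (0 : K))

/-- The natural bilinear form on the double extension. -/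
def doubleExtForm {K : Type*} [Field K] {L : Type*} [LieRing L] [LieAlgebra K L]
    (B : L →ₗ[K] L →ₗ[K] K) (f g : K × L × K) : K :=
  B f.2.1 g.2.1 + f.1 * g.2.2 + g.1 * f.2.2

theorem adapted_isomorphism_of_cohomologous_derivations
    {K : Type*} [Field K] (hchar : (2 : K) ≠ 0)
    {L : Type*} [LieRing L] [LieAlgebra K L]
    (B : L →ₗ[K] L →ₗ[K] K)
    (hsym : ∀ a b : L, B a b = B b a)
    (hinv : ∀ a b c : L, B ⁅a, b⁆ c = B a ⁅b, c⁆)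
    (hnd : ∀ a : L, (∀ b : L, B a b = 0) → a = 0)
    (D Dt : L →ₗ[K] L)
    (hder : ∀ a b : L, D ⁅a, b⁆ = ⁅D a, b⁆ + ⁅a, D b⁆)
    (hdert : ∀ a b : L, Dt ⁅a, b⁆ = ⁅Dt a, b⁆ + ⁅a, Dt b⁆)
    (hDinv : ∀ a b : L, B (D a) b + B a (D b) = 0)
    (hDtinv : ∀ a b : L, B (Dt a) b + B a (Dt b) = 0)
    (π₀ : L ≃ₗ[K] L)
    (hπ₀br : ∀ a b : L, π₀ ⁅a, b⁆ = ⁅π₀ a, π₀ b⁆)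
    (hπ₀B : ∀ a b : L, B (π₀ a) (π₀ b) = B a b)
    (lam : K) (hlam : lam ≠ 0) (κ : L)
    (hcob : ∀ b : L, π₀.symm (Dt (π₀ b)) = lam • D b + ⁅κ, b⁆) :
    ∃ π : K × L × K → K × L × K,
      (∀ (u v : K) (a : L),
        π (u, a, v) = (lam * u + B κ a - lam⁻¹ * ((2 : K)⁻¹ * B κ κ) * v,
          π₀ a - (lam⁻¹ * v) • π₀ κ, lam⁻¹ * v)) ∧
      Function.Bijective π ∧
      (∀ (c : K) (f g : K × L × K), π (c • f + g) = c • π f + π g) ∧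
      (∀ f g : K × L × K,
        π (doubleExtBracket B D f g) = doubleExtBracket B Dt (π f) (π g)) ∧
      (∀ f g : K × L × K, doubleExtForm B (π f) (π g) = doubleExtForm B f g) ∧
      π '' {f : K × L × K | f.2.2 = 0} = {f : K × L × K | f.2.2 = 0} := by
  -- key consequence of the cohomologous condition
  have hDt : ∀ b : L, Dt (π₀ b) = lam • π₀ (D b) + ⁅π₀ κ, π₀ b⁆ := by
    intro b
    have := congrArg π₀ (hcob b)
    rw [π₀.apply_symm_apply] at this
    rw [this, map_add, map_smul, hπ₀br]
  have hDκκ : B (D κ) κ = 0 := by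
    have h1 := hDinv κ κ
    rw [hsym κ (D κ)] at h1
    have : (2 : K) * B (D κ) κ = 0 := by rw [two_mul]; exact h1
    exact (mul_eq_zero.mp this).resolve_left hchar
  refine ⟨fun f => (lam * f.1 + B κ f.2.1 - lam⁻¹ * ((2 : K)⁻¹ * B κ κ) * f.2.2,
      π₀ f.2.1 - (lam⁻¹ * f.2.2) • π₀ κ, lam⁻¹ * f.2.2), fun u v a => rfl, ?_, ?_, ?_, ?_, ?_⟩
  · -- bijective
    rw [Function.bijective_iff_has_inverse]
    refine ⟨fun g => (lam⁻¹ * (g.1 - B κ (π₀.symm g.2.1 + g.2.2 • κ)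
        + lam⁻¹ * ((2 : K)⁻¹ * B κ κ) * (lam * g.2.2)),
        π₀.symm g.2.1 + g.2.2 • κ, lam * g.2.2), ?_, ?_⟩
    · rintro ⟨u, a, v⟩
      refine Prod.ext ?_ (Prod.ext ?_ ?_)
      · simp only [map_sub, map_smul, π₀.symm_apply_apply, smul_eq_mul, sub_add_cancel]
        field_simp
        ring
      · simp only [map_sub, map_smul, π₀.symm_apply_apply]
        abel
      · simp only [mul_inv_cancel_left₀ hlam]
    · rintro ⟨u, a, v⟩
      refine Prod.ext ?_ (Prod.ext ?_ ?_)
      · simp only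
        field_simp
        ring
      · simp only [map_add, map_smul, π₀.apply_symm_apply, inv_mul_cancel_left₀ hlam]
        abel
      · simp only [inv_mul_cancel_left₀ hlam]
  · -- linearity
    rintro c ⟨u, a, v⟩ ⟨u', a', v'⟩
    refine Prod.ext ?_ (Prod.ext ?_ ?_)
    · simp only [Prod.smul_fst, Prod.smul_snd, Prod.fst_add, Prod.snd_add, map_add,
        map_smul, smul_eq_mul]
      ring
    · simp only [Prod.smul_fst, Prod.smul_snd, Prod.fst_add, Prod.snd_add, map_add,
        map_smul, smul_eq_mul]
      module
    · simp only [Prod.smul_fst, Prod.smul_snd, Prod.fst_add, Prod.snd_add, smul_eq_mul]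
      ring
  · -- bracket
    have hκaκ : ∀ a : L, B ⁅κ, a⁆ κ = 0 := by
      intro a
      rw [hinv κ a κ, hsym, hinv a κ κ, lie_self, map_zero]
    rintro ⟨u, a, v⟩ ⟨u', a', v'⟩
    simp only [doubleExtBracket]
    refine Prod.ext ?_ (Prod.ext ?_ ?_)
    · have hκDκ : B κ (D κ) = 0 := by rw [← hsym]; exact hDκκ
      have hBDκ : ∀ b : L, B (D κ) b = -B κ (D b) := fun b => by
        linear_combination hDinv κ b
      have hDbκ : ∀ b : L, B (D b) κ = B κ (D b) := fun b => hsym _ _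
      have hinvκ : ∀ x y : L, B ⁅κ, x⁆ y = B κ ⁅x, y⁆ := fun x y => hinv κ x y
      simp only [map_add, map_sub, map_smul, hDt, LinearMap.add_apply, LinearMap.sub_apply,
        LinearMap.smul_apply, smul_eq_mul, ← hπ₀br, lie_self, map_zero, hπ₀B, hκaκ, hBDκ,
        hDbκ, hinvκ, hκDκ, LinearMap.zero_apply]
      field_simp
      ring
    · simp only [map_add, map_sub, map_smul, hDt, hπ₀br, lie_add, add_lie, lie_sub, sub_lie,
        lie_smul, smul_lie, lie_self, smul_zero, smul_sub, smul_add, smul_smul]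
      rw [show ⁅π₀ a, π₀ κ⁆ = -⁅π₀ κ, π₀ a⁆ from (lie_skew _ _).symm]
      match_scalars
      all_goals field_simp
      all_goals ring
    · simp only [mul_zero]
  · -- form
    rintro ⟨u, a, v⟩ ⟨u', a', v'⟩
    simp only [doubleExtForm, map_add, map_sub, map_smul, LinearMap.add_apply,
      LinearMap.sub_apply, LinearMap.smul_apply, smul_eq_mul, hπ₀B]
    rw [hsym a κ]
    have h1 : lam * lam⁻¹ = 1 := mul_inv_cancel₀ hlam
    have h2 : (2 : K) * 2⁻¹ = 1 := mul_inv_cancel₀ hchar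
    linear_combination (u * v' + u' * v) * h1 - lam⁻¹ * lam⁻¹ * v * v' * (B κ κ) * h2
  · -- image
    ext g
    simp only [Set.mem_image, Set.mem_setOf_eq]
    constructor
    · rintro ⟨f, hf, rfl⟩
      simp [hf]
    · intro hg
      refine ⟨(lam⁻¹ * (g.1 - B κ (π₀.symm g.2.1)), π₀.symm g.2.1, 0), rfl, ?_⟩
      refine Prod.ext ?_ (Prod.ext ?_ ?_)
      · simp only [mul_zero, sub_zero, mul_inv_cancel_left₀ hlam]
        ring
      · simp [π₀.apply_symm_apply]
      · simp [hg]
end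

section
/- Let D and D̃ be derivations of 𝔞 such that B is both D-invariant and D̃-invariant, and let 𝔤 and 𝔤̃ be the double extensions of (𝔞, B) by D and by D̃ on K × 𝔞 × K. Suppose π : K × 𝔞 × K → K × 𝔞 × K is a bijective K-linear map such that π ⁅f,g⁆_𝔤 = ⁅π f, π g⁆_𝔤̃ for all f,g, B_𝔤̃ (π f) (π g) = B_𝔤 f g for all f,g (where B_𝔤 (u,a,v) (u',a',v') := B a a' + u·v' + u'·v and likewise B_𝔤̃), and π maps the subspace K × 𝔞 × {0} onto K × 𝔞 × {0}. Then there exist a unique bijective Lie algebra homomorphism π₀ : 𝔞 → 𝔞 with B (π₀ a) (π₀ b) = B a b for all a,b, a unique λ ∈ K with λ ≠ 0, and a unique κ ∈ 𝔞, such that π₀⁻¹ ∘ D̃ ∘ π₀ = λ • D + ad κ (as linear maps 𝔞 → 𝔞) and π (u,a,v) = (λ·u + B κ a − λ⁻¹·ρ·v, π₀ a − (λ⁻¹·v) • π₀ κ, λ⁻¹·v) for all (u,a,v), where ρ := (2 : K)⁻¹ • B κ κ. -/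
theorem data_of_adapted_isomorphism
    {K : Type*} [Field K] (hchar : (2 : K) ≠ 0)
    {L : Type*} [LieRing L] [LieAlgebra K L]
    (B : L →ₗ[K] L →ₗ[K] K)
    (hsym : ∀ a b : L, B a b = B b a)
    (hinv : ∀ a b c : L, B ⁅a, b⁆ c = B a ⁅b, c⁆)
    (hnd : ∀ a : L, (∀ b : L, B a b = 0) → a = 0)
    (D Dt : L →ₗ[K] L)
    (hder : ∀ a b : L, D ⁅a, b⁆ = ⁅D a, b⁆ + ⁅a, D b⁆)
    (hdert : ∀ a b : L, Dt ⁅a, b⁆ = ⁅Dt a, b⁆ + ⁅a, Dt b⁆)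
    (hDinv : ∀ a b : L, B (D a) b + B a (D b) = 0)
    (hDtinv : ∀ a b : L, B (Dt a) b + B a (Dt b) = 0)
    (π : K × L × K → K × L × K)
    (hbij : Function.Bijective π)
    (hlin : ∀ (c : K) (f g : K × L × K), π (c • f + g) = c • π f + π g)
    (hbr : ∀ f g : K × L × K,
      π (doubleExtBracket B D f g) = doubleExtBracket B Dt (π f) (π g))
    (hB : ∀ f g : K × L × K, doubleExtForm B (π f) (π g) = doubleExtForm B f g)
    (hadapt : π '' {f : K × L × K | f.2.2 = 0} = {f : K × L × K | f.2.2 = 0}) :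
    ∃! t : (L ≃ₗ[K] L) × K × L,
      (∀ a b : L, t.1 ⁅a, b⁆ = ⁅t.1 a, t.1 b⁆) ∧
      (∀ a b : L, B (t.1 a) (t.1 b) = B a b) ∧
      t.2.1 ≠ 0 ∧
      (∀ b : L, t.1.symm (Dt (t.1 b)) = t.2.1 • D b + ⁅t.2.2, b⁆) ∧
      (∀ (u v : K) (a : L),
        π (u, a, v) = (t.2.1 * u + B t.2.2 a - (t.2.1)⁻¹ * ((2 : K)⁻¹ * B t.2.2 t.2.2) * v,
          t.1 a - ((t.2.1)⁻¹ * v) • t.1 t.2.2, (t.2.1)⁻¹ * v)) := by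
  -- basic linearity facts
  have hadd : ∀ f g : K × L × K, π (f + g) = π f + π g := by
    intro f g; have h := hlin 1 f g; simpa using h
  have hzero : π 0 = 0 := by
    have h := hadd 0 0
    rw [add_zero] at h
    exact left_eq_add.mp h
  have hsmul : ∀ (x : K) (f : K × L × K), π (x • f) = x • π f := by
    intro x f; have h := hlin x f 0; simpa [hzero] using h
  have hWmem : ∀ f : K × L × K, f.2.2 = 0 → (π f).2.2 = 0 := by
    intro f hf
    have : π f ∈ π '' {f : K × L × K | f.2.2 = 0} := ⟨f, hf, rfl⟩
    rw [hadapt] at this; exact this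
  have hWsurj : ∀ g : K × L × K, g.2.2 = 0 → ∃ f, f.2.2 = 0 ∧ π f = g := by
    intro g hg
    have : g ∈ π '' {f : K × L × K | f.2.2 = 0} := by rw [hadapt]; exact hg
    obtain ⟨f, hf, hpf⟩ := this; exact ⟨f, hf, hpf⟩
  -- names for the components
  set lam : K := (π ((1:K), (0:L), (0:K))).1 with hlamdef
  set α : K := (π ((0:K), (0:L), (1:K))).1 with hαdef
  set c : L := (π ((0:K), (0:L), (1:K))).2.1 with hcdef
  set p0 : L → L := fun a => (π ((0:K), a, (0:K))).2.1 with hp0def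
  set φf : L → K := fun a => (π ((0:K), a, (0:K))).1 with hφdef
  -- π (1,0,0) = (lam, 0, 0)
  have e1 : π ((1:K), (0:L), (0:K)) = (lam, 0, 0) := by
    have h22 : (π ((1:K),(0:L),(0:K))).2.2 = 0 := hWmem _ rfl
    have h21 : (π ((1:K),(0:L),(0:K))).2.1 = 0 := by
      apply hnd; intro b
      obtain ⟨f, hf, hpf⟩ := hWsurj ((0:K), b, (0:K)) rfl
      have h := hB ((1:K),(0:L),(0:K)) f
      rw [hpf] at h
      simp [doubleExtForm, hf] at h
      exact h
    exact Prod.ext rfl (Prod.ext h21 h22)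
  have e0 : ∀ a : L, π ((0:K), a, (0:K)) = (φf a, p0 a, 0) :=
    fun a => Prod.ext rfl (Prod.ext rfl (hWmem _ rfl))
  -- lam ≠ 0, and third component of π (0,0,1) is lam⁻¹
  have hld : lam * (π ((0:K),(0:L),(1:K))).2.2 = 1 := by
    have h := hB ((0:K),(0:L),(1:K)) ((1:K),(0:L),(0:K))
    rw [e1] at h
    simpa [doubleExtForm, mul_comm] using h
  have hlam0 : lam ≠ 0 := left_ne_zero_of_mul_eq_one hld
  have e2 : π ((0:K),(0:L),(1:K)) = (α, c, lam⁻¹) := by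
    refine Prod.ext rfl (Prod.ext rfl ?_)
    field_simp
    linear_combination hld
  -- the master decomposition formula
  have eπ : ∀ (u v : K) (a : L),
      π (u, a, v) = (u * lam + (φf a + v * α), p0 a + v • c, v * lam⁻¹) := by
    intro u v a
    have hd : (u, a, v) = u • ((1:K),(0:L),(0:K)) +
        (((0:K),a,(0:K)) + v • ((0:K),(0:L),(1:K))) := by
      simp [Prod.ext_iff]
    rw [hd, hadd, hsmul, hadd, hsmul, e1, e0, e2]
    simp [Prod.ext_iff, Prod.smul_mk, smul_eq_mul]
  -- isometry
  have hiso : ∀ a b : L, B (p0 a) (p0 b) = B a b := by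
    intro a b
    have h := hB ((0:K),a,(0:K)) ((0:K),b,(0:K))
    rw [e0 a, e0 b] at h
    simpa [doubleExtForm] using h
  -- p0 is a Lie algebra map
  have hLie : ∀ a b : L, p0 ⁅a, b⁆ = ⁅p0 a, p0 b⁆ := by
    intro a b
    have h := hbr ((0:K),a,(0:K)) ((0:K),b,(0:K))
    rw [e0 a, e0 b] at h
    simp only [doubleExtBracket, zero_smul, sub_zero, add_zero, smul_zero] at h
    rw [eπ] at h
    have h2 := (Prod.ext_iff.mp (Prod.ext_iff.mp h).2).1
    simpa using h2
  -- the derivation relation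
  have hDrel : ∀ b : L, p0 (D b) = ⁅c, p0 b⁆ + lam⁻¹ • Dt (p0 b) := by
    intro b
    have h := hbr ((0:K),(0:L),(1:K)) ((0:K),b,(0:K))
    rw [e2, e0 b] at h
    simp only [doubleExtBracket, map_zero, zero_lie, one_smul, zero_smul, sub_zero,
      zero_add, LinearMap.zero_apply, smul_zero] at h
    rw [eπ] at h
    have h2 := (Prod.ext_iff.mp (Prod.ext_iff.mp h).2).1
    simpa using h2
  -- relation for φ
  have hφrel : ∀ a : L, B c (p0 a) + φf a * lam⁻¹ = 0 := by
    intro a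
    have h := hB ((0:K),(0:L),(1:K)) ((0:K),a,(0:K))
    rw [e2, e0 a] at h
    simpa [doubleExtForm] using h
  -- relation for α
  have hαrel : B c c + α * lam⁻¹ + α * lam⁻¹ = 0 := by
    have h := hB ((0:K),(0:L),(1:K)) ((0:K),(0:L),(1:K))
    rw [e2] at h
    simpa [doubleExtForm] using h
  -- bijectivity of p0
  have hp0inj : ∀ a : L, p0 a = 0 → a = 0 := by
    intro a ha
    apply hnd; intro b
    rw [← hiso a b, ha]
    simp
  have hsurjf : ∀ b : L, ∃ a : L, p0 a = b := by
    intro b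
    obtain ⟨f, hf, hpf⟩ := hWsurj ((0:K), b, (0:K)) rfl
    refine ⟨f.2.1, ?_⟩
    have h : π (f.1, f.2.1, f.2.2) = ((0:K), b, (0:K)) := hpf
    rw [eπ] at h
    have h2 := (Prod.ext_iff.mp (Prod.ext_iff.mp h).2).1
    rw [hf] at h2
    simpa using h2
  -- build the linear equivalence
  have hp0add : ∀ a b : L, p0 (a + b) = p0 a + p0 b := by
    intro a b
    have hd : ((0:K), a + b, (0:K)) = ((0:K),a,(0:K)) + ((0:K),b,(0:K)) := by
      simp [Prod.ext_iff]
    show (π ((0:K), a + b, (0:K))).2.1 = _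
    rw [hd, hadd]; rfl
  have hp0smul : ∀ (x : K) (a : L), p0 (x • a) = x • p0 a := by
    intro x a
    have hd : ((0:K), x • a, (0:K)) = x • ((0:K),a,(0:K)) := by
      simp [Prod.ext_iff]
    show (π ((0:K), x • a, (0:K))).2.1 = _
    rw [hd, hsmul]; rfl
  let π₀L : L →ₗ[K] L :=
    { toFun := p0
      map_add' := hp0add
      map_smul' := fun x a => by simpa using hp0smul x a }
  have hπ₀bij : Function.Bijective π₀L := by
    constructor
    · intro a b hab
      have : p0 (a - b) = 0 := by
        show (π₀L : L → L) (a - b) = 0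
        rw [map_sub]
        exact sub_eq_zero.mpr hab
      have := hp0inj _ this
      exact sub_eq_zero.mp this
    · exact hsurjf
  let π₀e : L ≃ₗ[K] L := LinearEquiv.ofBijective π₀L hπ₀bij
  have hπ₀ea : ∀ a : L, π₀e a = p0 a := fun a => rfl
  let κ : L := π₀e.symm (-(lam • c))
  have hκ : p0 κ = -(lam • c) := π₀e.apply_symm_apply _
  -- useful scalar facts
  have hBκa : ∀ a : L, B κ a = -(lam * B c (p0 a)) := by
    intro a
    rw [← hiso κ a, hκ]
    simp
  have hφval : ∀ a : L, φf a = B κ a := by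
    intro a
    rw [hBκa a]
    have h := hφrel a
    field_simp at h ⊢
    linear_combination h
  have hκκ : B κ κ = lam * lam * B c c := by
    rw [← hiso κ κ, hκ]
    simp [mul_assoc]
  have hαval : α = -(2⁻¹ * lam * B c c) := by
    have h := hαrel
    field_simp at h ⊢
    linear_combination h
  refine ⟨⟨π₀e, lam, κ⟩, ⟨?_, ?_, ?_, ?_, ?_⟩, ?_⟩
  · exact hLie
  · exact hiso
  · exact hlam0
  · -- the conjugation relation
    intro b
    rw [LinearEquiv.symm_apply_eq]
    show Dt (p0 b) = p0 (lam • D b + ⁅κ, b⁆)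
    rw [hp0add, hp0smul, hLie, hDrel, hκ]
    rw [smul_add, smul_smul, mul_inv_cancel₀ hlam0, one_smul, neg_lie, smul_lie]
    abel
  · -- the explicit formula
    intro u v a
    rw [eπ]
    refine Prod.ext ?_ (Prod.ext ?_ ?_)
    · show u * lam + (φf a + v * α) =
        lam * u + B κ a - lam⁻¹ * (2⁻¹ * B κ κ) * v
      rw [hφval, hκκ, hαval]
      field_simp
      ring
    · show p0 a + v • c = p0 a - (lam⁻¹ * v) • p0 κ
      rw [hκ, smul_neg, sub_neg_eq_add, smul_smul]
      congr 1
      rw [mul_assoc, mul_comm v lam, ← mul_assoc, inv_mul_cancel₀ hlam0, one_mul]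
    · show v * lam⁻¹ = lam⁻¹ * v
      ring
  · -- uniqueness
    rintro ⟨e, μ, k⟩ ⟨hLie', hiso', hμ, hcond4', hform'⟩
    have he : ∀ a : L, e a = p0 a := by
      intro a
      have h := hform' 0 0 a
      rw [e0 a] at h
      have h2 := (Prod.ext_iff.mp (Prod.ext_iff.mp h).2).1
      simpa using h2.symm
    have h1 := hform' 0 1 0
    rw [e2] at h1
    have h13 := (Prod.ext_iff.mp (Prod.ext_iff.mp h1).2).2
    have hμlam : μ = lam := by
      have : lam⁻¹ = μ⁻¹ := by simpa using h13
      exact (inv_injective this).symm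
    have h12 : c = -(lam⁻¹ • p0 k) := by
      have h12 := (Prod.ext_iff.mp (Prod.ext_iff.mp h1).2).1
      rw [he k, hμlam] at h12
      simpa using h12
    have hk : k = κ := by
      have hpk : p0 k = -(lam • c) := by
        have h' : lam • c = -(p0 k) := by
          rw [h12, smul_neg, smul_smul, mul_inv_cancel₀ hlam0, one_smul]
        simpa using (congrArg Neg.neg h').symm
      exact hπ₀bij.1 (show π₀L k = π₀L κ from hpk.trans hκ.symm)
    have heq : e = π₀e := by
      apply LinearEquiv.toLinearMap_injective
      apply LinearMap.ext
      intro a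
      simp [he a, hπ₀ea a]
    rw [heq, hμlam, hk]
end

section
/- Let K have characteristic 3. Let sq : 𝔞 → 𝔞 be a 3-structure on 𝔞 (⁅sq a, b⁆ = (ad a)³ b, sq (λ • a) = λ³ • sq a, sq (a+b) = sq a + sq b + ⁅b,⁅b,a⁆⁆ + 2•⁅a,⁅b,a⁆⁆). Let D, D̃ be derivations of 𝔞 with B both D- and D̃-invariant, and let 𝔤, 𝔤̃ be the double extensions of (𝔞, B) by D, D̃ on K × 𝔞 × K. Let sq_𝔤 : 𝔤 → 𝔤 be a 3-structure on (𝔤, ⁅·,·⁆_𝔤) (same three axioms for the bracket of 𝔤) with sq_𝔤 (0,a,0) = (𝒫 a, sq a, 0) for all a, sq_𝔤 (0,0,1) = (l, a₀, γ), sq_𝔤 (1,0,0) = (m, b₀, 0), and let sq_𝔤̃ be a 3-structure on 𝔤̃ with corresponding data (𝒫̃, l̃, ã₀, γ̃, m̃, b̃₀). Let π₀ : 𝔞 → 𝔞 be a bijective Lie algebra homomorphism with B (π₀ a)(π₀ b) = B a b, λ ∈ K nonzero, κ ∈ 𝔞 with π₀⁻¹ ∘ D̃ ∘ π₀ = λ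 • D + ad κ, and let π (u,a,v) := (λ·u + B κ a − λ⁻¹·ρ·v, π₀ a − (λ⁻¹·v) • π₀ κ, λ⁻¹·v), where ρ := (2 : K)⁻¹ • B κ κ. If π (sq_𝔤 f) = sq_𝔤̃ (π f) for all f ∈ 𝔤, then: m̃ = λ⁻³·(λ·m + B κ b₀); b̃₀ = λ⁻³ • π₀ b₀; γ̃ = λ²·γ; π₀ (sq a) = sq (π₀ a) + (B κ a)³ • b̃₀ for all a ∈ 𝔞; and 𝒫̃ (π₀ a) = λ·𝒫 a + B κ (sq a) − (B κ a)³·m̃ for all a ∈ 𝔞. -/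
theorem adapted_isomorphism_is_three_structure_homomorphism
    {K : Type*} [Field K] [CharP K 3]
    {L : Type*} [LieRing L] [LieAlgebra K L]
    (B : L →ₗ[K] L →ₗ[K] K)
    (hsym : ∀ a b : L, B a b = B b a)
    (hinv : ∀ a b c : L, B ⁅a, b⁆ c = B a ⁅b, c⁆)
    (hnd : ∀ a : L, (∀ b : L, B a b = 0) → a = 0)
    -- a 3-structure on 𝔞
    (sq : L → L)
    (hsq_ad : ∀ a b : L, ⁅sq a, b⁆ = ⁅a, ⁅a, ⁅a, b⁆⁆⁆)
    (hsq_smul : ∀ (l : K) (a : L), sq (l • a) = l ^ 3 • sq a)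
    (hsq_add : ∀ a b : L, sq (a + b) = sq a + sq b + ⁅b, ⁅b, a⁆⁆ + (2 : K) • ⁅a, ⁅b, a⁆⁆)
    -- the two derivations
    (D Dt : L →ₗ[K] L)
    (hder : ∀ a b : L, D ⁅a, b⁆ = ⁅D a, b⁆ + ⁅a, D b⁆)
    (hdert : ∀ a b : L, Dt ⁅a, b⁆ = ⁅Dt a, b⁆ + ⁅a, Dt b⁆)
    (hDinv : ∀ a b : L, B (D a) b + B a (D b) = 0)
    (hDtinv : ∀ a b : L, B (Dt a) b + B a (Dt b) = 0)
    -- a 3-structure on 𝔤 = double extension by D, with its data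
    (sqg : K × L × K → K × L × K)
    (hsqg_ad : ∀ f g : K × L × K,
      doubleExtBracket B D (sqg f) g =
        doubleExtBracket B D f (doubleExtBracket B D f (doubleExtBracket B D f g)))
    (hsqg_smul : ∀ (lam : K) (f : K × L × K), sqg (lam • f) = lam ^ 3 • sqg f)
    (hsqg_add : ∀ f g : K × L × K,
      sqg (f + g) = sqg f + sqg g + doubleExtBracket B D g (doubleExtBracket B D g f) +
        (2 : K) • doubleExtBracket B D f (doubleExtBracket B D g f))
    (P : L → K) (l γ m : K) (a₀ b₀ : L)
    (hsqg_a : ∀ a : L, sqg ((0 : K), a, (0 : K)) = (P a, sq a, (0 : K)))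
    (hsqg_xs : sqg ((0 : K), (0 : L), (1 : K)) = (l, a₀, γ))
    (hsqg_x : sqg ((1 : K), (0 : L), (0 : K)) = (m, b₀, (0 : K)))
    -- a 3-structure on 𝔤̃ = double extension by D̃, with its data
    (sqgt : K × L × K → K × L × K)
    (hsqgt_ad : ∀ f g : K × L × K,
      doubleExtBracket B Dt (sqgt f) g =
        doubleExtBracket B Dt f (doubleExtBracket B Dt f (doubleExtBracket B Dt f g)))
    (hsqgt_smul : ∀ (lam : K) (f : K × L × K), sqgt (lam • f) = lam ^ 3 • sqgt f)
    (hsqgt_add : ∀ f g : K × L × K,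
      sqgt (f + g) = sqgt f + sqgt g + doubleExtBracket B Dt g (doubleExtBracket B Dt g f) +
        (2 : K) • doubleExtBracket B Dt f (doubleExtBracket B Dt g f))
    (Pt : L → K) (lt γt mt : K) (a₀t b₀t : L)
    (hsqgt_a : ∀ a : L, sqgt ((0 : K), a, (0 : K)) = (Pt a, sq a, (0 : K)))
    (hsqgt_xs : sqgt ((0 : K), (0 : L), (1 : K)) = (lt, a₀t, γt))
    (hsqgt_x : sqgt ((1 : K), (0 : L), (0 : K)) = (mt, b₀t, (0 : K)))
    -- the adapted isomorphism data
    (π₀ : L ≃ₗ[K] L)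
    (hπ₀br : ∀ a b : L, π₀ ⁅a, b⁆ = ⁅π₀ a, π₀ b⁆)
    (hπ₀B : ∀ a b : L, B (π₀ a) (π₀ b) = B a b)
    (lam : K) (hlam : lam ≠ 0) (κ : L)
    (hcob : ∀ b : L, π₀.symm (Dt (π₀ b)) = lam • D b + ⁅κ, b⁆)
    (π : K × L × K → K × L × K)
    (hπ : ∀ (u v : K) (a : L),
      π (u, a, v) = (lam * u + B κ a - lam⁻¹ * ((2 : K)⁻¹ * B κ κ) * v,
        π₀ a - (lam⁻¹ * v) • π₀ κ, lam⁻¹ * v))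
    -- π intertwines the 3-structures
    (hcomp : ∀ f : K × L × K, π (sqg f) = sqgt (π f)) :
    mt = (lam ^ 3)⁻¹ * (lam * m + B κ b₀) ∧
    b₀t = (lam ^ 3)⁻¹ • π₀ b₀ ∧
    γt = lam ^ 2 * γ ∧
    (∀ a : L, π₀ (sq a) = sq (π₀ a) + (B κ a) ^ 3 • b₀t) ∧
    (∀ a : L, Pt (π₀ a) = lam * P a + B κ (sq a) - (B κ a) ^ 3 * mt) := by

  classical
  -- sqgt on (u, 0, 0)
  have hsux : ∀ u : K, sqgt (u, (0:L), (0:K)) = (u^3 * mt, u^3 • b₀t, (0:K)) := by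
    intro u
    have h0 : (u, (0:L), (0:K)) = u • ((1:K), (0:L), (0:K)) := by
      simp [Prod.smul_mk, smul_eq_mul]
    rw [h0, hsqgt_smul, hsqgt_x]
    simp [Prod.smul_mk, smul_eq_mul]
  -- splitting off the first coordinate (it is central)
  have hsplit : ∀ (u c : K) (a : L),
      sqgt (u, a, c) = sqgt ((0:K), a, c) + sqgt (u, (0:L), (0:K)) := by
    intro u c a
    have h := hsqgt_add ((0:K), a, c) (u, (0:L), (0:K))
    simp only [doubleExtBracket] at h
    simp only [map_zero, LinearMap.zero_apply, zero_lie, lie_zero, zero_smul, smul_zero,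
      add_zero, zero_add, sub_zero, zero_sub, neg_zero] at h
    have hz : ((0:K), (0:L), (0:K)) = (0 : K × L × K) := rfl
    rw [hz] at h
    simpa using h
  -- third coordinate of sqgt
  have hthird : ∀ (u c : K) (a : L), (sqgt (u, a, c)).2.2 = c^3 * γt := by
    intro u c a
    rw [hsplit, hsux]
    have h := hsqgt_add ((0:K), a, (0:K)) ((0:K), (0:L), c)
    simp only [doubleExtBracket] at h
    have h2 : ((0:K), (0:L), c) = c • ((0:K), (0:L), (1:K)) := by
      simp [Prod.smul_mk, smul_eq_mul]
    rw [h2, hsqgt_smul, hsqgt_xs] at h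
    have h3 : ((0:K), a, (0:K)) + c • ((0:K), (0:L), (1:K)) = ((0:K), a, c) := by
      simp [Prod.smul_mk, smul_eq_mul]
    rw [h3] at h
    rw [h, hsqgt_a]
    simp [Prod.smul_mk, smul_eq_mul]
  -- sqgt on (u, a, 0)
  have hgen : ∀ (u : K) (a : L),
      sqgt (u, a, (0:K)) = (Pt a + u^3 * mt, sq a + u^3 • b₀t, (0:K)) := by
    intro u a
    rw [hsplit, hsux, hsqgt_a]
    simp [Prod.mk_add_mk]
  have hlam3 : lam ^ 3 ≠ 0 := pow_ne_zero _ hlam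
  -- equation from f = (1,0,0)
  have h1 := hcomp (1, (0:L), (0:K))
  rw [hsqg_x, hπ m (0:K) b₀, hπ 1 (0:K) (0:L)] at h1
  simp only [map_zero, LinearMap.zero_apply, mul_zero, mul_one, map_zero, sub_zero,
    add_zero, zero_smul, sub_zero, inv_zero] at h1
  have h1' : (lam * m + B κ b₀, π₀ b₀, (0:K))
      = (lam^3 * mt, lam^3 • b₀t, (0:K)) := by
    rw [← hsux lam]
    convert h1 using 2 <;> simp
  have hmt : mt = (lam ^ 3)⁻¹ * (lam * m + B κ b₀) := by
    have := congrArg Prod.fst h1'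
    simp only at this
    field_simp
    linear_combination -this
  have hb₀t : b₀t = (lam ^ 3)⁻¹ • π₀ b₀ := by
    have h2 := congrArg (fun p : K × L × K => p.2.1) h1'
    simp only at h2
    rw [h2, smul_smul, inv_mul_cancel₀ hlam3, one_smul]
  -- equation from f = (0,0,1)
  have h2 := hcomp ((0:K), (0:L), (1:K))
  rw [hsqg_xs, hπ l γ a₀, hπ 0 1 (0:L)] at h2
  have h2' := congrArg (fun p : K × L × K => p.2.2) h2
  simp only at h2'
  rw [hthird] at h2'
  have hγt : γt = lam ^ 2 * γ := by
    field_simp at h2'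
    have hc : γt * lam = lam ^ 2 * γ * lam := by linear_combination (-lam) * h2'
    exact mul_right_cancel₀ hlam hc
  -- equations from f = (0,a,0)
  have h3 : ∀ a : L, (lam * P a + B κ (sq a), π₀ (sq a), (0:K))
      = (Pt (π₀ a) + (B κ a)^3 * mt, sq (π₀ a) + (B κ a)^3 • b₀t, (0:K)) := by
    intro a
    have h := hcomp ((0:K), a, (0:K))
    rw [hsqg_a, hπ (P a) (0:K) (sq a), hπ 0 0 a] at h
    simp only [mul_zero, add_zero, sub_zero, zero_smul, sub_zero, mul_zero] at h
    rw [hgen] at h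
    convert h using 2 <;> simp
  refine ⟨hmt, hb₀t, hγt, ?_, ?_⟩
  · intro a
    exact congrArg (fun p : K × L × K => p.2.1) (h3 a)
  · intro a
    have := congrArg Prod.fst (h3 a)
    simp only at this
    linear_combination -this
end
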